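/- Let Θ : Ω → Ψ be measurable and {P_θ}_{θ∈Ψ} a disintegration of P over P_Θ consistent with Θ. Let I be countable, T countably generated, and {X_i}_{i∈I} measurable maps Ω → Y. Then {X_i}_{i∈I} is P-conditionally identically distributed given Θ (i.e., P(F ∩ X_i⁻¹(B)) = P(F ∩ X_j⁻¹(B)) for all i,j∈I, F∈σ(Θ), B∈T) if and only if for P_Θ-almost all θ∈Ψ the maps {X_i}_{i∈I} are identically distributed under P_θ. -/

import Mathlib

open MeasureTheory Set ENNReal

lemma countable_generatePiSystem' {α : Type*} {S : Set (Set α)} (hS : S.Countable) :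
    (generatePiSystem S).Countable := by
  have hsub : generatePiSystem S ⊆ Set.sInter '' {T : Set (Set α) | T.Finite ∧ T ⊆ S} := by
    intro t ht
    induction ht with
    | base h_s =>
      exact ⟨{_}, ⟨finite_singleton _, singleton_subset_iff.2 h_s⟩, sInter_singleton _⟩
    | inter h_s h_t h_nonempty ih_s ih_t =>
      obtain ⟨Ts, ⟨hTsf, hTss⟩, rfl⟩ := ih_s
      obtain ⟨Tt, ⟨hTtf, hTts⟩, rfl⟩ := ih_t
      exact ⟨Ts ∪ Tt, ⟨hTsf.union hTtf, union_subset hTss hTts⟩, sInter_union _ _⟩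
  exact ((countable_setOf_finite_subset hS).image _).mono hsub

/-- For `I` countable and `T` countably generated, `{X_i}` is
`P`-conditionally identically distributed given `Θ` (i.e.
`P(F ∩ X_i⁻¹ B) = P(F ∩ X_j⁻¹ B)` for all `i, j`, `F ∈ σ(Θ)`, measurable `B`) iff
for `P_Θ`-almost all `θ` the maps `{X_i}` are identically distributed under `P_θ`. -/
theorem condIdentDistrib_iff_ae_identDistrib
    {Ω Y Ψ I : Type*} [MeasurableSpace Ω] [mY : MeasurableSpace Y] [mΨ : MeasurableSpace Ψ]
    [MeasurableSpace.CountablyGenerated Y] [Countable I]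
    (P : Measure Ω) [IsProbabilityMeasure P]
    (Θ : Ω → Ψ) (hΘ : Measurable Θ)
    (Pd : Ψ → Measure Ω) (hPdprob : ∀ θ, IsProbabilityMeasure (Pd θ))
    (hPdmeas : ∀ D : Set Ω, MeasurableSet D → Measurable fun θ => Pd θ D)
    (hPdint : ∀ D : Set Ω, MeasurableSet D → ∫⁻ θ, Pd θ D ∂(P.map Θ) = P D)
    (hPdcons : ∀ D : Set Ψ, MeasurableSet D →
      ∀ᵐ θ ∂(P.map Θ).restrict D, Pd θ (Θ ⁻¹' D) = 1)
    (X : I → Ω → Y) (hX : ∀ i, Measurable (X i)) :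
    (∀ i j : I, ∀ F : Set Ω, MeasurableSet[MeasurableSpace.comap Θ mΨ] F →
        ∀ B : Set Y, MeasurableSet B → P (F ∩ X i ⁻¹' B) = P (F ∩ X j ⁻¹' B)) ↔
      (∀ᵐ θ ∂(P.map Θ), ∀ i j : I, (Pd θ).map (X i) = (Pd θ).map (X j)) := by
  have hPmap : IsProbabilityMeasure (P.map Θ) := Measure.isProbabilityMeasure_map hΘ.aemeasurable
  -- Key disintegration identity
  have key : ∀ D : Set Ψ, MeasurableSet D → ∀ A : Set Ω, MeasurableSet A →
      P (Θ ⁻¹' D ∩ A) = ∫⁻ θ in D, Pd θ A ∂(P.map Θ) := by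
    intro D hD A hA
    rw [← hPdint _ ((hΘ hD).inter hA), ← lintegral_add_compl _ hD]
    have h1 : ∫⁻ θ in D, Pd θ (Θ ⁻¹' D ∩ A) ∂(P.map Θ)
        = ∫⁻ θ in D, Pd θ A ∂(P.map Θ) := by
      refine lintegral_congr_ae ?_
      filter_upwards [hPdcons D hD] with θ hθ
      have := hPdprob θ
      have hc : Pd θ ((Θ ⁻¹' D)ᶜ) = 0 := by
        rw [measure_compl (hΘ hD) (measure_ne_top _ _), hθ]
        simp
      refine le_antisymm (measure_mono inter_subset_right) ?_
      calc Pd θ A ≤ Pd θ ((Θ ⁻¹' D ∩ A) ∪ (Θ ⁻¹' D)ᶜ) := by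
            refine measure_mono fun x hx => ?_
            by_cases hxD : x ∈ Θ ⁻¹' D
            · exact Or.inl ⟨hxD, hx⟩
            · exact Or.inr hxD
        _ ≤ Pd θ (Θ ⁻¹' D ∩ A) + Pd θ ((Θ ⁻¹' D)ᶜ) := measure_union_le _ _
        _ = Pd θ (Θ ⁻¹' D ∩ A) := by rw [hc, add_zero]
    have h2 : ∫⁻ θ in Dᶜ, Pd θ (Θ ⁻¹' D ∩ A) ∂(P.map Θ) = 0 := by
      have : ∫⁻ θ in Dᶜ, Pd θ (Θ ⁻¹' D ∩ A) ∂(P.map Θ)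
          = ∫⁻ _ in Dᶜ, (0 : ℝ≥0∞) ∂(P.map Θ) := by
        refine lintegral_congr_ae ?_
        filter_upwards [hPdcons Dᶜ hD.compl] with θ hθ
        have := hPdprob θ
        have h0 : Pd θ (Θ ⁻¹' D) = 0 := by
          have : Pd θ ((Θ ⁻¹' Dᶜ)ᶜ) = 0 := by
            rw [measure_compl (hΘ hD.compl) (measure_ne_top _ _), hθ]
            simp
          simpa [preimage_compl] using this
        exact le_antisymm (le_trans (measure_mono inter_subset_left) h0.le) (zero_le)
      rw [this, lintegral_zero]
    rw [h1, h2, add_zero]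
  constructor
  · -- forward direction
    intro h
    set C : Set (Set Y) := generatePiSystem (MeasurableSpace.countableGeneratingSet Y) with hC
    have hCc : C.Countable :=
      countable_generatePiSystem' MeasurableSpace.countable_countableGeneratingSet
    have hCmeas : ∀ B ∈ C, MeasurableSet B := fun B hB =>
      generatePiSystem_measurableSet
        (fun s hs => MeasurableSpace.measurableSet_countableGeneratingSet hs) B hB
    have hae : ∀ᵐ θ ∂(P.map Θ), ∀ i j : I, ∀ B ∈ C,
        Pd θ (X i ⁻¹' B) = Pd θ (X j ⁻¹' B) := by
      rw [ae_all_iff]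
      intro i
      rw [ae_all_iff]
      intro j
      rw [ae_ball_iff hCc]
      intro B hB
      have hBm : MeasurableSet B := hCmeas B hB
      refine ae_eq_of_forall_setLIntegral_eq_of_sigmaFinite
        (hPdmeas _ ((hX i) hBm)) (hPdmeas _ ((hX j) hBm)) ?_
      intro s hs _
      rw [← key s hs _ ((hX i) hBm), ← key s hs _ ((hX j) hBm)]
      exact h i j (Θ ⁻¹' s) ⟨s, hs, rfl⟩ B hBm
    filter_upwards [hae] with θ hθ i j
    have := hPdprob θ
    have hmi : IsProbabilityMeasure ((Pd θ).map (X i)) :=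
      Measure.isProbabilityMeasure_map (hX i).aemeasurable
    have hmj : IsProbabilityMeasure ((Pd θ).map (X j)) :=
      Measure.isProbabilityMeasure_map (hX j).aemeasurable
    refine ext_of_generate_finite C ?_ (isPiSystem_generatePiSystem _) ?_ ?_
    · rw [hC, generateFrom_generatePiSystem_eq,
        MeasurableSpace.generateFrom_countableGeneratingSet]
    · intro B hB
      rw [Measure.map_apply (hX i) (hCmeas B hB), Measure.map_apply (hX j) (hCmeas B hB)]
      exact hθ i j B hB
    · simp [hmi.measure_univ, hmj.measure_univ]
  · -- reverse direction
    intro h i j F hF B hB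
    obtain ⟨D, hD, rfl⟩ := hF
    rw [key D hD _ ((hX i) hB), key D hD _ ((hX j) hB)]
    refine lintegral_congr_ae (ae_restrict_of_ae ?_)
    filter_upwards [h] with θ hθ
    have := hPdprob θ
    rw [← Measure.map_apply (hX i) hB, ← Measure.map_apply (hX j) hB, hθ i j]
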